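/- Weak stability inequalities in geometric (convex-hull) form, Hermitian-matrix instance (Lidskii–Wielandt): Let A and B be m×m complex Hermitian matrices, and for a Hermitian matrix M let λ(M) = (λ₁(M) ≥ … ≥ λₘ(M)) ∈ ℝᵐ denote its eigenvalues listed with multiplicity in decreasing order. Then λ(A + B) − λ(A) lies in the convex hull of the set {(λ_{σ(1)}(B), …, λ_{σ(m)}(B)) : σ a permutation of {1,…,m}}; i.e. λ(A+B) ∈ λ(A) + conv(S_m · λ(B)). -/

import Mathlib

open Matrix Finset
open scoped ComplexOrder

namespace LidskiiAux

variable {m : ℕ}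

noncomputable def qf (M : Matrix (Fin m) (Fin m) ℂ) (x : EuclideanSpace ℂ (Fin m)) : ℝ :=
  Complex.re (star (WithLp.equiv 2 _ x) ⬝ᵥ (M *ᵥ (WithLp.equiv 2 _ x)))

lemma norm_sq_eq_sum (x : EuclideanSpace ℂ (Fin m)) : ‖x‖ ^ 2 = ∑ i, ‖x i‖ ^ 2 := by
  rw [EuclideanSpace.norm_eq, Real.sq_sqrt]
  positivity

lemma parseval (M : Matrix (Fin m) (Fin m) ℂ) (hM : M.IsHermitian)
    (x : EuclideanSpace ℂ (Fin m)) :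
    ∑ i, ‖hM.eigenvectorBasis.repr x i‖ ^ 2 = ∑ i, ‖x i‖ ^ 2 := by
  rw [← norm_sq_eq_sum, ← norm_sq_eq_sum, LinearIsometryEquiv.norm_map]

lemma qf_sub (M N : Matrix (Fin m) (Fin m) ℂ) (x : EuclideanSpace ℂ (Fin m)) :
    qf (M - N) x = qf M x - qf N x := by
  unfold qf
  rw [sub_mulVec, dotProduct_sub, Complex.sub_re]

lemma qf_smul_one (t : ℝ) (x : EuclideanSpace ℂ (Fin m)) :
    qf ((t : ℂ) • (1 : Matrix (Fin m) (Fin m) ℂ)) x = t * ∑ i, ‖x i‖ ^ 2 := by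
  unfold qf
  rw [smul_mulVec, one_mulVec, dotProduct_smul]
  have : star (WithLp.equiv 2 (Fin m → ℂ) x) ⬝ᵥ (WithLp.equiv 2 (Fin m → ℂ) x)
      = ((∑ i, ‖x i‖ ^ 2 : ℝ) : ℂ) := by
    rw [dotProduct, Complex.ofReal_sum]
    refine Finset.sum_congr rfl fun i _ => ?_
    show starRingEnd ℂ (x i) * x i = _
    rw [mul_comm, Complex.mul_conj, Complex.normSq_eq_norm_sq]
  rw [this, smul_eq_mul, ← Complex.ofReal_mul, Complex.ofReal_re]

lemma qf_nonneg_of_posSemidef {M : Matrix (Fin m) (Fin m) ℂ} (hM : M.PosSemidef)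
    (x : EuclideanSpace ℂ (Fin m)) : 0 ≤ qf M x :=
  hM.re_dotProduct_nonneg _

/-- span of a subfamily of the eigenbasis -/
noncomputable def spanE (M : Matrix (Fin m) (Fin m) ℂ) (hM : M.IsHermitian)
    (J : Finset (Fin m)) : Submodule ℂ (EuclideanSpace ℂ (Fin m)) :=
  Submodule.span ℂ (Set.range (fun j : J => (hM.eigenvectorBasis j : EuclideanSpace ℂ (Fin m))))

lemma finrank_spanE (M : Matrix (Fin m) (Fin m) ℂ) (hM : M.IsHermitian) (J : Finset (Fin m)) :
    Module.finrank ℂ (spanE M hM J) = J.card := by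
  rw [spanE, finrank_span_eq_card, Fintype.card_coe]
  exact hM.eigenvectorBasis.orthonormal.linearIndependent.comp _ Subtype.coe_injective

lemma repr_eq_zero_of_mem_spanE (M : Matrix (Fin m) (Fin m) ℂ) (hM : M.IsHermitian)
    (J : Finset (Fin m)) {x : EuclideanSpace ℂ (Fin m)} (hx : x ∈ spanE M hM J)
    {j : Fin m} (hj : j ∉ J) : hM.eigenvectorBasis.repr x j = 0 := by
  set e := hM.eigenvectorBasis
  rw [e.repr_apply_apply]
  induction hx using Submodule.span_induction with
  | mem y hy =>
    obtain ⟨⟨i, hi⟩, rfl⟩ := hy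
    have hne : j ≠ i := fun h => hj (h ▸ hi)
    rw [orthonormal_iff_ite.mp e.orthonormal j i, if_neg hne]
  | zero => simp
  | add y z _ _ hy hz => rw [inner_add_right, hy, hz, add_zero]
  | smul c y _ hy => rw [inner_smul_right, hy, mul_zero]

lemma qf_eq_inner (M : Matrix (Fin m) (Fin m) ℂ) (x : EuclideanSpace ℂ (Fin m)) :
    qf M x = Complex.re (inner (𝕜 := ℂ) x (Matrix.toEuclideanLin M x)) := by
  rw [EuclideanSpace.inner_eq_star_dotProduct, ofLp_toEuclideanLin_apply, dotProduct_comm]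
  rfl

lemma qf_eq_sum (M : Matrix (Fin m) (Fin m) ℂ) (hM : M.IsHermitian)
    (x : EuclideanSpace ℂ (Fin m)) :
    qf M x = ∑ i, hM.eigenvalues i * ‖hM.eigenvectorBasis.repr x i‖ ^ 2 := by
  classical
  set e := hM.eigenvectorBasis with he
  set r : Fin m → ℂ := fun i => e.repr x i with hr
  have hx : x = ∑ i, r i • e i := (e.sum_repr x).symm
  have hy : Matrix.toEuclideanLin M x = ∑ i, ((hM.eigenvalues i : ℂ) * r i) • e i := by
    conv_lhs => rw [hx]
    rw [map_sum]
    refine Finset.sum_congr rfl fun i _ => ?_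
    rw [_root_.map_smul]
    have : Matrix.toEuclideanLin M (e i) = (hM.eigenvalues i : ℂ) • e i := by
      apply (WithLp.equiv 2 (Fin m → ℂ)).injective
      rw [WithLp.equiv_apply, WithLp.equiv_apply, ofLp_toEuclideanLin_apply]
      simpa [Complex.real_smul] using hM.mulVec_eigenvectorBasis i
    rw [this, smul_smul, mul_comm]

  rw [qf_eq_inner, hy]
  rw [inner_sum, Complex.re_sum]
  refine Finset.sum_congr rfl fun i _ => ?_
  rw [inner_smul_right]
  have : inner (𝕜 := ℂ) x (e i) = starRingEnd ℂ (r i) := by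
    rw [← inner_conj_symm, show r i = inner ℂ (e i) x from e.repr_apply_apply x i]
  rw [this]
  have : ((hM.eigenvalues i : ℂ) * r i) * starRingEnd ℂ (r i)
      = (hM.eigenvalues i : ℂ) * (r i * starRingEnd ℂ (r i)) := by ring
  rw [this, Complex.mul_conj, ← Complex.ofReal_mul, Complex.ofReal_re,
    Complex.normSq_eq_norm_sq]


lemma le_qf (M : Matrix (Fin m) (Fin m) ℂ) (hM : M.IsHermitian) (J : Finset (Fin m)) (t : ℝ)
    (hJ : ∀ j ∈ J, t ≤ hM.eigenvalues j) {x : EuclideanSpace ℂ (Fin m)}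
    (hx : x ∈ spanE M hM J) : t * ∑ i, ‖x i‖ ^ 2 ≤ qf M x := by
  rw [qf_eq_sum M hM x, ← parseval M hM x, Finset.mul_sum]
  refine Finset.sum_le_sum fun j _ => ?_
  by_cases hj : j ∈ J
  · exact mul_le_mul_of_nonneg_right (hJ j hj) (by positivity)
  · rw [repr_eq_zero_of_mem_spanE M hM J hx hj]
    simp

lemma qf_le (M : Matrix (Fin m) (Fin m) ℂ) (hM : M.IsHermitian) (J : Finset (Fin m)) (t : ℝ)
    (hJ : ∀ j ∈ J, hM.eigenvalues j ≤ t) {x : EuclideanSpace ℂ (Fin m)}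
    (hx : x ∈ spanE M hM J) : qf M x ≤ t * ∑ i, ‖x i‖ ^ 2 := by
  rw [qf_eq_sum M hM x, ← parseval M hM x, Finset.mul_sum]
  refine Finset.sum_le_sum fun j _ => ?_
  by_cases hj : j ∈ J
  · exact mul_le_mul_of_nonneg_right (hJ j hj) (by positivity)
  · rw [repr_eq_zero_of_mem_spanE M hM J hx hj]
    simp

lemma card_filter_perm (σ : Equiv.Perm (Fin m)) (p : Fin m → Prop) [DecidablePred p] :
    (univ.filter fun j => p (σ j)).card = (univ.filter p).card := by
  refine Finset.card_bij' (fun j _ => σ j) (fun j _ => σ.symm j) ?_ ?_ ?_ ?_ <;>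
    simp [Finset.mem_filter]

lemma card_le_add_card_ge (k : Fin m) :
    (univ.filter (· ≤ k)).card + (univ.filter (k ≤ ·)).card = m + 1 := by
  have hu : (univ.filter (· ≤ k)) ∪ (univ.filter (k ≤ ·)) = univ := by
    ext i
    simp [le_total i k]
  have hi : (univ.filter (· ≤ k)) ∩ (univ.filter (k ≤ ·)) = {k} := by
    ext i
    simp [Finset.mem_filter, Finset.mem_inter, ← le_antisymm_iff, eq_comm]
  have := Finset.card_union_add_card_inter (univ.filter (· ≤ k)) (univ.filter (k ≤ ·))
  rw [hu, hi] at this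
  simpa using this.symm

lemma sum_sq_pos {x : EuclideanSpace ℂ (Fin m)} (hx : x ≠ 0) : 0 < ∑ i, ‖x i‖ ^ 2 := by
  have : ∃ i, x i ≠ 0 := by
    by_contra h
    push_neg at h
    exact hx (by ext i; exact h i)
  obtain ⟨i, hi⟩ := this
  refine Finset.sum_pos' (fun j _ => by positivity) ⟨i, Finset.mem_univ i, by have := norm_pos_iff.mpr hi; positivity⟩

/-- Key monotonicity: if `N - M - t•1` is PSD then the sorted eigenvalues satisfy
`v k + t ≤ w k` for all `k`. -/
lemma eig_mono {M N : Matrix (Fin m) (Fin m) ℂ} (hM : M.IsHermitian) (hN : N.IsHermitian)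
    (t : ℝ) (hpsd : (N - M - (t : ℂ) • 1).PosSemidef)
    {v w : Fin m → ℝ} (hv : Antitone v) (hw : Antitone w)
    (hve : ∃ σ : Equiv.Perm (Fin m), ∀ j, hM.eigenvalues j = v (σ j))
    (hwe : ∃ σ : Equiv.Perm (Fin m), ∀ j, hN.eigenvalues j = w (σ j))
    (k : Fin m) : v k + t ≤ w k := by
  classical
  obtain ⟨σ, hσ⟩ := hve
  obtain ⟨τ, hτ⟩ := hwe
  set J1 := univ.filter fun j => σ j ≤ k with hJ1
  set J2 := univ.filter fun j => k ≤ τ j with hJ2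
  have hdim : Module.finrank ℂ (spanE M hM J1) + Module.finrank ℂ (spanE N hN J2) = m + 1 := by
    rw [finrank_spanE, finrank_spanE, hJ1, hJ2, card_filter_perm σ (· ≤ k),
      card_filter_perm τ (k ≤ ·), card_le_add_card_ge]
  have hpos : 0 < Module.finrank ℂ ↥(spanE M hM J1 ⊓ spanE N hN J2) := by
    have h1 := Submodule.finrank_sup_add_finrank_inf_eq (spanE M hM J1) (spanE N hN J2)
    have h2 : Module.finrank ℂ ↥(spanE M hM J1 ⊔ spanE N hN J2) ≤ m :=
      le_trans (Submodule.finrank_le _) (by simp)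
    omega
  obtain ⟨⟨x, hx⟩, hx0⟩ := Module.finrank_pos_iff_exists_ne_zero.mp hpos
  have hxne : x ≠ 0 := by
    intro h
    exact hx0 (by simp [h])
  set S := ∑ i, ‖x i‖ ^ 2 with hS
  have hSpos : 0 < S := sum_sq_pos hxne
  have h1 : v k * S ≤ qf M x := by
    refine le_qf M hM J1 (v k) (fun j hj => ?_) (hx.1)
    rw [hσ j]
    exact hv (by simpa [hJ1] using hj)
  have h2 : qf N x ≤ w k * S := by
    refine qf_le N hN J2 (w k) (fun j hj => ?_) (hx.2)
    rw [hτ j]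
    exact hw (by simpa [hJ2] using hj)
  have h3 : 0 ≤ qf N x - qf M x - t * S := by
    have h0 := qf_nonneg_of_posSemidef hpsd x
    rwa [qf_sub, qf_sub, qf_smul_one] at h0
  have : (v k + t) * S ≤ w k * S := by nlinarith
  exact le_of_mul_le_mul_right this hSpos


lemma trace_eq_sum_eigs (M : Matrix (Fin m) (Fin m) ℂ) (hM : M.IsHermitian) :
    Matrix.trace M = ((∑ i, hM.eigenvalues i : ℝ) : ℂ) := by
  conv_lhs => rw [hM.spectral_theorem]
  rw [Unitary.conjStarAlgAut_apply, Matrix.trace_mul_cycle, Unitary.coe_star_mul_self, one_mul, trace_diagonal]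
  simp

lemma exists_antitone_sort (f : Fin m → ℝ) :
    ∃ (g : Fin m → ℝ) (σ : Equiv.Perm (Fin m)), Antitone g ∧ ∀ j, f j = g (σ j) := by
  refine ⟨f ∘ Tuple.sort (fun i => -f i), (Tuple.sort (fun i => -f i))⁻¹, ?_, fun j => ?_⟩
  · intro i j hij
    have := Tuple.monotone_sort (fun i => -f i) hij
    simpa using this
  · simp

lemma card_val_lt (k : ℕ) (hk : k ≤ m) :
    (univ.filter fun j : Fin m => (j : ℕ) < k).card = k := by
  rw [show k = (Finset.range k).card from (Finset.card_range k).symm]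
  refine Finset.card_bij' (fun j _ => (j : ℕ)) (fun n hn => ⟨n, ?_⟩) ?_ ?_ ?_ ?_
  · exact lt_of_lt_of_le (Finset.mem_range.mp hn) hk
  all_goals simp

/-- The "clipped-above" companion matrix. -/
lemma exists_up (B : Matrix (Fin m) (Fin m) ℂ) (hB : B.IsHermitian) (β : ℝ) :
    ∃ (P : Matrix (Fin m) (Fin m) ℂ) (hP : P.IsHermitian),
      (P - B).PosSemidef ∧ (P - (β : ℂ) • 1).PosSemidef ∧
      Matrix.trace P = ((∑ i, max (hB.eigenvalues i) β : ℝ) : ℂ) := by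
  classical
  set U : Matrix (Fin m) (Fin m) ℂ := (hB.eigenvectorUnitary : Matrix (Fin m) (Fin m) ℂ) with hU
  set p : Fin m → ℝ := fun i => max (hB.eigenvalues i) β with hp
  have hUsU : star U * U = 1 := Unitary.coe_star_mul_self hB.eigenvectorUnitary
  have hUUs : U * star U = 1 := Unitary.coe_mul_star_self hB.eigenvectorUnitary
  have hsd : ∀ q : Fin m → ℝ, (0 ≤ q) → (U * diagonal (Complex.ofReal ∘ q) * star U).PosSemidef := by
    intro q hq
    rw [Matrix.star_eq_conjTranspose U]
    exact (posSemidef_diagonal_iff.mpr fun i => by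
      simpa using Complex.zero_le_real.mpr (hq i)).mul_mul_conjTranspose_same U
  refine ⟨U * diagonal (Complex.ofReal ∘ p) * star U, ?_, ?_, ?_, ?_⟩
  · rw [Matrix.star_eq_conjTranspose U]
    refine isHermitian_mul_mul_conjTranspose U ?_
    exact isHermitian_diagonal_of_self_adjoint _ (funext fun i => Complex.conj_ofReal _)
  · have hBd : B = U * diagonal (Complex.ofReal ∘ hB.eigenvalues) * star U := hB.spectral_theorem
    have : U * diagonal (Complex.ofReal ∘ p) * star U - B
        = U * diagonal (Complex.ofReal ∘ fun i => p i - hB.eigenvalues i) * star U := by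
      conv_lhs => rw [hBd]
      rw [← sub_mul, ← mul_sub, diagonal_sub]
      congr 2
      funext i
      simp [Matrix.diagonal]
    rw [this]
    exact hsd _ fun i => sub_nonneg.mpr (le_max_left _ _)
  · have h1 : (β : ℂ) • (1 : Matrix (Fin m) (Fin m) ℂ)
        = U * diagonal (Complex.ofReal ∘ fun _ => β) * star U := by
      rw [show (diagonal (Complex.ofReal ∘ fun _ : Fin m => β)) = (β : ℂ) • 1 from
        (smul_one_eq_diagonal _).symm]
      rw [mul_smul_comm, mul_one, smul_mul_assoc, hUUs]
    have : U * diagonal (Complex.ofReal ∘ p) * star U - (β : ℂ) • 1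
        = U * diagonal (Complex.ofReal ∘ fun i => p i - β) * star U := by
      rw [h1, ← sub_mul, ← mul_sub, diagonal_sub]
      congr 2
      funext i
      simp [Matrix.diagonal]
    rw [this]
    exact hsd _ fun i => sub_nonneg.mpr (le_max_right _ _)
  · rw [Matrix.trace_mul_cycle, hUsU, one_mul, trace_diagonal]
    simp


lemma sum_perm_eq {f g : Fin m → ℝ}
    (h : ∃ σ : Equiv.Perm (Fin m), ∀ j, f j = g (σ j)) : ∑ i, f i = ∑ i, g i := by
  obtain ⟨σ, hσ⟩ := h
  rw [Finset.sum_congr rfl fun i _ => hσ i]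
  exact Equiv.sum_comp σ g

/-- Lidskii majorization inequality: for any index set `I`, the sum of `c - a` over `I`
is at most the sum of the `|I|` largest entries of `b`. -/
lemma lidskii_major
    (A B : Matrix (Fin m) (Fin m) ℂ) (hA : A.IsHermitian) (hB : B.IsHermitian)
    (a b c : Fin m → ℝ) (ha : Antitone a) (hb : Antitone b) (hc : Antitone c)
    (hae : ∃ σ : Equiv.Perm (Fin m), ∀ j, hA.eigenvalues j = a (σ j))
    (hbe : ∃ σ : Equiv.Perm (Fin m), ∀ j, hB.eigenvalues j = b (σ j))
    (hce : ∃ σ : Equiv.Perm (Fin m), ∀ j, (hA.add hB).eigenvalues j = c (σ j))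
    (I : Finset (Fin m)) :
    ∑ i ∈ I, (c i - a i) ≤ ∑ j ∈ univ.filter (fun j : Fin m => (j : ℕ) < I.card), b j := by
  classical
  rcases Nat.eq_zero_or_pos I.card with h0 | hpos
  · rw [Finset.card_eq_zero.mp h0]
    simp [h0]
  · set k := I.card with hk
    have hkm : k ≤ m := by simpa using Finset.card_le_univ I
    set κ : Fin m := ⟨k - 1, by omega⟩ with hκ
    set β := b κ with hβ
    obtain ⟨P, hP, hPB, hPβ, hPtr⟩ := exists_up B hB β
    have hAP : (A + P).IsHermitian := hA.add hP
    obtain ⟨e, ρ, he_anti, he⟩ := exists_antitone_sort hAP.eigenvalues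
    have h1 : ∀ i, c i ≤ e i := by
      intro i
      have hpsd : (A + P - (A + B) - ((0 : ℝ) : ℂ) • 1).PosSemidef := by
        have : A + P - (A + B) - ((0 : ℝ) : ℂ) • 1 = P - B := by
          simp only [Complex.ofReal_zero, zero_smul, sub_zero]
          abel
        rw [this]
        exact hPB
      have := eig_mono (hA.add hB) hAP 0 hpsd hc he_anti hce ⟨ρ, he⟩ i
      linarith
    have h2 : ∀ i, a i + β ≤ e i := by
      intro i
      have hpsd : (A + P - A - (β : ℂ) • 1).PosSemidef := by
        have : A + P - A - (β : ℂ) • 1 = P - (β : ℂ) • 1 := by abel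
        rw [this]
        exact hPβ
      exact eig_mono hA hAP β hpsd ha he_anti hae ⟨ρ, he⟩ i
    have htr : ∑ i, e i = ∑ i, a i + ∑ i, max (b i) β := by
      have hTAP : Matrix.trace (A + P) = ((∑ i, e i : ℝ) : ℂ) := by
        rw [trace_eq_sum_eigs (A + P) hAP, sum_perm_eq ⟨ρ, he⟩]
      have hTA : Matrix.trace A = ((∑ i, a i : ℝ) : ℂ) := by
        rw [trace_eq_sum_eigs A hA, sum_perm_eq hae]
      have hTP : Matrix.trace P = ((∑ i, max (b i) β : ℝ) : ℂ) := by
        rw [hPtr]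
        norm_cast
        refine sum_perm_eq ?_
        obtain ⟨σ, hσ⟩ := hbe
        exact ⟨σ, fun j => by rw [hσ j]⟩
      have := Matrix.trace_add A P
      rw [hTAP, hTA, hTP] at this
      exact_mod_cast this
    have hmaxsum : ∑ i, max (b i) β
        = (∑ j ∈ univ.filter (fun j : Fin m => (j : ℕ) < k), b j) + (m - k : ℝ) * β := by
      rw [← Finset.sum_filter_add_sum_filter_not univ (fun j : Fin m => (j : ℕ) < k)]
      congr 1
      · refine Finset.sum_congr rfl fun j hj => max_eq_left (hb ?_)
        have hjk : (j : ℕ) < k := (Finset.mem_filter.mp hj).2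
        rw [Fin.le_def]
        show (j : ℕ) ≤ k - 1
        omega
      · have hcard : (univ.filter fun j : Fin m => ¬ (j : ℕ) < k).card = m - k := by
          have := Finset.card_filter_add_card_filter_not
            (s := (univ : Finset (Fin m))) (p := fun j : Fin m => (j : ℕ) < k)
          rw [card_val_lt k hkm] at this
          simp only [Finset.card_univ, Fintype.card_fin] at this
          omega
        have hconst : ∀ j ∈ univ.filter (fun j : Fin m => ¬ (j : ℕ) < k), max (b j) β = β := by
          intro j hj
          have hjk : ¬ (j : ℕ) < k := (Finset.mem_filter.mp hj).2
          refine max_eq_right (hb ?_)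
          rw [Fin.le_def]
          show k - 1 ≤ (j : ℕ)
          omega
        rw [Finset.sum_congr rfl hconst, Finset.sum_const, hcard, nsmul_eq_mul, Nat.cast_sub hkm]
    have hsplit := Finset.sum_add_sum_compl I (fun i => e i - a i)
    have hIc : (Iᶜ : Finset (Fin m)).card = m - k := by
      rw [Finset.card_compl]
      simp [hk]
    have hlow : (m - k : ℝ) * β ≤ ∑ i ∈ Iᶜ, (e i - a i) := by
      have h := Finset.sum_le_sum (s := Iᶜ) (f := fun _ : Fin m => β) (g := fun i => e i - a i)
        (fun i _ => by have := h2 i; linarith)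
      rw [Finset.sum_const, hIc, nsmul_eq_mul, Nat.cast_sub hkm] at h
      exact h
    have hall : ∑ i, (e i - a i) = ∑ i, max (b i) β := by
      rw [Finset.sum_sub_distrib]
      linarith [htr]
    have hIle : ∑ i ∈ I, (c i - a i) ≤ ∑ i ∈ I, (e i - a i) :=
      Finset.sum_le_sum fun i _ => by have := h1 i; linarith
    have hfin : ∑ i ∈ I, (e i - a i) ≤ ∑ j ∈ univ.filter (fun j : Fin m => (j : ℕ) < k), b j := by
      linarith [hsplit, hall, hlow, hmaxsum]
    linarith



lemma abel_le (u y bb : Fin m → ℝ) (hu : Antitone u)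
    (hpart : ∀ k : ℕ, k ≤ m → ∑ j ∈ univ.filter (fun j : Fin m => (j : ℕ) < k), y j
        ≤ ∑ j ∈ univ.filter (fun j : Fin m => (j : ℕ) < k), bb j)
    (htot : ∑ j, y j = ∑ j, bb j) :
    ∑ j, u j * y j ≤ ∑ j, u j * bb j := by
  classical
  rcases Nat.eq_zero_or_pos m with hm | hm
  · subst hm
    simp
  set d : Fin m → ℝ := fun j => y j - bb j with hd
  set D : ℕ → ℝ := fun k => ∑ j ∈ univ.filter (fun j : Fin m => (j : ℕ) < k), d j with hD
  have hDle : ∀ k ≤ m, D k ≤ 0 := by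
    intro k hk
    have := hpart k hk
    simp only [hD, hd, Finset.sum_sub_distrib]
    linarith
  have key : ∀ k, k ≤ m → ∀ t : ℝ, (∀ j : Fin m, (j : ℕ) < k → t ≤ u j) →
      ∑ j ∈ univ.filter (fun j : Fin m => (j : ℕ) < k), u j * d j ≤ t * D k := by
    intro k
    induction k with
    | zero =>
      intro _ t _
      simp [hD]
    | succ k ih =>
      intro hk1 t ht
      have hkm' : k < m := hk1
      set jk : Fin m := ⟨k, hkm'⟩ with hjk
      have hfil : univ.filter (fun j : Fin m => (j : ℕ) < k + 1)
          = insert jk (univ.filter (fun j : Fin m => (j : ℕ) < k)) := by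
        ext j
        simp only [Finset.mem_insert, Finset.mem_filter, Finset.mem_univ, true_and]
        constructor
        · intro h
          rcases Nat.lt_succ_iff_lt_or_eq.mp h with h | h
          · exact Or.inr h
          · exact Or.inl (Fin.ext h)
        · rintro (rfl | h)
          · exact Nat.lt_succ_self k
          · exact Nat.lt_succ_of_lt h
      have hnot : jk ∉ univ.filter (fun j : Fin m => (j : ℕ) < k) := by
        simp [hjk]
      have hDk : D (k + 1) = D k + d jk := by
        simp only [hD]
        rw [hfil, Finset.sum_insert hnot]
        ring
      have ih2 := ih (le_of_lt hk1) (u jk) fun j hj => hu (by rw [Fin.le_def]; show (j : ℕ) ≤ k; omega)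
      have htk : t ≤ u jk := ht jk (Nat.lt_succ_self k)
      have hmul : u jk * D (k + 1) ≤ t * D (k + 1) :=
        mul_le_mul_of_nonpos_right htk (hDle (k + 1) hk1)
      calc ∑ j ∈ univ.filter (fun j : Fin m => (j : ℕ) < k + 1), u j * d j
          = (∑ j ∈ univ.filter (fun j : Fin m => (j : ℕ) < k), u j * d j) + u jk * d jk := by
            rw [hfil, Finset.sum_insert hnot]
            ring
        _ ≤ u jk * D k + u jk * d jk := by linarith
        _ = u jk * D (k + 1) := by rw [hDk]; ring
        _ ≤ t * D (k + 1) := hmul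
  have hfilm : univ.filter (fun j : Fin m => (j : ℕ) < m) = univ := by
    ext j
    simp [j.isLt]
  have hDm : D m = 0 := by
    simp only [hD, hfilm, hd, Finset.sum_sub_distrib]
    linarith
  have hfin := key m le_rfl (u ⟨m - 1, by omega⟩)
    (fun j _ => hu (by rw [Fin.le_def]; simp; omega))
  rw [hfilm, hDm, mul_zero] at hfin
  have : ∑ j, u j * d j = ∑ j, u j * y j - ∑ j, u j * bb j := by
    rw [← Finset.sum_sub_distrib]
    refine Finset.sum_congr rfl fun j _ => by simp [hd]; ring
  linarith


lemma total_eq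
    (A B : Matrix (Fin m) (Fin m) ℂ) (hA : A.IsHermitian) (hB : B.IsHermitian)
    (a b c : Fin m → ℝ)
    (hae : ∃ σ : Equiv.Perm (Fin m), ∀ j, hA.eigenvalues j = a (σ j))
    (hbe : ∃ σ : Equiv.Perm (Fin m), ∀ j, hB.eigenvalues j = b (σ j))
    (hce : ∃ σ : Equiv.Perm (Fin m), ∀ j, (hA.add hB).eigenvalues j = c (σ j)) :
    ∑ i, (c i - a i) = ∑ i, b i := by
  have h1 := Matrix.trace_add A B
  rw [show Matrix.trace (A + B) = _ from trace_eq_sum_eigs (A + B) (hA.add hB),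
    trace_eq_sum_eigs A hA, trace_eq_sum_eigs B hB, sum_perm_eq hce, sum_perm_eq hae,
    sum_perm_eq hbe] at h1
  have h2 : ∑ i, c i = ∑ i, a i + ∑ i, b i := by exact_mod_cast h1
  rw [Finset.sum_sub_distrib]
  linarith

end LidskiiAux

open LidskiiAux in
/-- Lidskii–Wielandt (weak stability inequalities in convex-hull form) for
Hermitian matrices: if `a`, `b`, `c` are the decreasingly ordered spectra of
the Hermitian matrices `A`, `B` and `A + B` respectively, then
`c - a` lies in the convex hull of the orbit of `b` under coordinate
permutations. -/
theorem lidskii_wielandt_hermitian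
    (m : ℕ) (A B : Matrix (Fin m) (Fin m) ℂ)
    (hA : A.IsHermitian) (hB : B.IsHermitian)
    (a b c : Fin m → ℝ)
    (ha : Antitone a) (hb : Antitone b) (hc : Antitone c)
    (hae : ∃ σ : Equiv.Perm (Fin m), ∀ j, hA.eigenvalues j = a (σ j))
    (hbe : ∃ σ : Equiv.Perm (Fin m), ∀ j, hB.eigenvalues j = b (σ j))
    (hce : ∃ σ : Equiv.Perm (Fin m), ∀ j, (hA.add hB).eigenvalues j = c (σ j)) :
    c - a ∈ convexHull ℝ {x : Fin m → ℝ | ∃ σ : Equiv.Perm (Fin m), x = b ∘ σ} := by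
  classical
  set S : Set (Fin m → ℝ) := {x : Fin m → ℝ | ∃ σ : Equiv.Perm (Fin m), x = b ∘ σ} with hS
  have hSfin : S.Finite := by
    have hr : S = Set.range (fun σ : Equiv.Perm (Fin m) => b ∘ σ) := by
      ext x
      simp only [hS, Set.mem_setOf_eq, Set.mem_range]
      exact ⟨fun ⟨σ, h⟩ => ⟨σ, h.symm⟩, fun ⟨σ, h⟩ => ⟨σ, h.symm⟩⟩
    rw [hr]
    exact Set.finite_range _
  by_contra hnot
  obtain ⟨f, s, hfs, hsx⟩ := geometric_hahn_banach_closed_point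
    (convex_convexHull ℝ S) (hSfin.isClosed_convexHull (𝕜 := ℝ)) hnot
  set uvec : Fin m → ℝ := fun i => f (fun j => if i = j then 1 else 0) with huvec
  have hfrep : ∀ y : Fin m → ℝ, f y = ∑ i, y i * uvec i := by
    intro y
    conv_lhs => rw [pi_eq_sum_univ y, map_sum]
    exact Finset.sum_congr rfl fun i _ => by rw [_root_.map_smul]; rfl
  obtain ⟨g, τ', hg_anti, hgu⟩ := exists_antitone_sort uvec
  have hguτ : ∀ i, g i = uvec (τ'⁻¹ i) := by
    intro i
    rw [hgu (τ'⁻¹ i)]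
    simp
  set y : Fin m → ℝ := fun i => c (τ'⁻¹ i) - a (τ'⁻¹ i) with hy
  have hpart : ∀ k : ℕ, k ≤ m → ∑ j ∈ Finset.univ.filter (fun j : Fin m => (j : ℕ) < k), y j
      ≤ ∑ j ∈ Finset.univ.filter (fun j : Fin m => (j : ℕ) < k), b j := by
    intro k hk
    have hinj : Function.Injective (τ'⁻¹ : Equiv.Perm (Fin m)) := (τ'⁻¹).injective
    have himg := lidskii_major A B hA hB a b c ha hb hc hae hbe hce
      ((Finset.univ.filter (fun j : Fin m => (j : ℕ) < k)).image (⇑τ'⁻¹))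
    rw [Finset.card_image_of_injective _ hinj, card_val_lt k hk,
      Finset.sum_image (fun p _ q _ h => hinj h)] at himg
    exact himg
  have htot : ∑ j, y j = ∑ j, b j := by
    rw [show ∑ j, y j = ∑ j, (c j - a j) from Equiv.sum_comp τ'⁻¹ (fun j => c j - a j)]
    exact total_eq A B hA hB a b c hae hbe hce
  have habel := abel_le g y b hg_anti hpart htot
  have hfx : f (c - a) = ∑ i, g i * y i := by
    rw [hfrep (c - a)]
    rw [show ∑ i, (c - a) i * uvec i = ∑ i, uvec i * (c i - a i) from
      Finset.sum_congr rfl fun i _ => by simp [mul_comm]]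
    rw [← Equiv.sum_comp τ'⁻¹ (fun i => uvec i * (c i - a i))]
    exact Finset.sum_congr rfl fun i _ => by rw [hguτ i]
  have hfb : f (b ∘ τ') = ∑ i, g i * b i := by
    rw [hfrep (b ∘ τ')]
    rw [← Equiv.sum_comp τ'⁻¹ (fun j => (b ∘ τ') j * uvec j)]
    refine Finset.sum_congr rfl fun i _ => ?_
    simp only [Function.comp_apply, (Equiv.Perm.eq_inv_iff_eq.mp rfl : τ' (τ'⁻¹ i) = i)]
    rw [hguτ i, mul_comm]
  have hmem : (b ∘ τ') ∈ convexHull ℝ S := subset_convexHull ℝ S ⟨τ', rfl⟩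
  have hlt := hfs _ hmem
  rw [hfb] at hlt
  rw [hfx] at hsx
  linarith
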